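/- Let t > 0 be a real number with t ≠ 1, and let A and B be the linear endomorphisms of ℝ² determined by A(1,0) = (−1, 0), A(0,1) = (1 + t^{-1}, 1), B(1,0) = (1, 1 + t), B(0,1) = (0, −1). Then for every integer j ≥ 0: (A∘B)^j (1,0) = (1/(t^j(1−t))) · (1 − t^{2j+1}, t(1 − t^{2j})); B∘(A∘B)^j (1,0) = (1/(t^j(1−t))) · (1 − t^{2j+1}, 1 − t^{2j+2}); (B∘A)^j (0,1) = (1/(t^j(1−t))) · (1 − t^{2j}, 1 − t^{2j+1}); and A∘(B∘A)^j (0,1) = (1/(t^{j+1}(1−t))) · (1 − t^{2j+2}, t(1 − t^{2j+1})). -/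

import Mathlib

/-- Let `t > 0`, `t ≠ 1`, and let `A, B` be the linear endomorphisms of `ℝ²`
with `A(1,0) = (−1,0)`, `A(0,1) = (1 + t⁻¹, 1)`, `B(1,0) = (1, 1 + t)`, `B(0,1) = (0,−1)`.
Then for every `j ≥ 0`:
`(A∘B)^j (1,0) = (1/(t^j(1−t))) • (1 − t^{2j+1}, t(1 − t^{2j}))`,
`B∘(A∘B)^j (1,0) = (1/(t^j(1−t))) • (1 − t^{2j+1}, 1 − t^{2j+2})`,
`(B∘A)^j (0,1) = (1/(t^j(1−t))) • (1 − t^{2j}, 1 − t^{2j+1})`,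
`A∘(B∘A)^j (0,1) = (1/(t^{j+1}(1−t))) • (1 − t^{2j+2}, t(1 − t^{2j+1}))`. -/
theorem stmt_10 (t : ℝ) (ht : 0 < t) (ht1 : t ≠ 1)
    (A B : (ℝ × ℝ) →ₗ[ℝ] (ℝ × ℝ))
    (hA1 : A (1, 0) = (-1, 0)) (hA2 : A (0, 1) = (1 + t⁻¹, 1))
    (hB1 : B (1, 0) = (1, 1 + t)) (hB2 : B (0, 1) = (0, -1)) :
    ∀ j : ℕ,
      ((A * B) ^ j) (1, 0) =
        (1 / (t ^ j * (1 - t))) • ((1 - t ^ (2 * j + 1), t * (1 - t ^ (2 * j))) : ℝ × ℝ) ∧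
      (B * (A * B) ^ j) (1, 0) =
        (1 / (t ^ j * (1 - t))) • ((1 - t ^ (2 * j + 1), 1 - t ^ (2 * j + 2)) : ℝ × ℝ) ∧
      ((B * A) ^ j) (0, 1) =
        (1 / (t ^ j * (1 - t))) • ((1 - t ^ (2 * j), 1 - t ^ (2 * j + 1)) : ℝ × ℝ) ∧
      (A * (B * A) ^ j) (0, 1) =
        (1 / (t ^ (j + 1) * (1 - t))) •
          ((1 - t ^ (2 * j + 2), t * (1 - t ^ (2 * j + 1))) : ℝ × ℝ) := by
  have ht0 : t ≠ 0 := ne_of_gt ht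
  have ht1' : (1 : ℝ) - t ≠ 0 := sub_ne_zero.mpr (Ne.symm ht1)
  have hA' : ∀ x y : ℝ, A (x, y) = (-x + y * (1 + t⁻¹), y) := by
    intro x y
    have h : ((x, y) : ℝ × ℝ) = x • ((1, 0) : ℝ × ℝ) + y • ((0, 1) : ℝ × ℝ) := by
      simp [Prod.ext_iff]
    rw [h, map_add, map_smul, map_smul, hA1, hA2]
    simp only [Prod.smul_def, Prod.mk_add_mk, Prod.ext_iff, smul_eq_mul]
    constructor <;> ring
  have hB' : ∀ x y : ℝ, B (x, y) = (x, x * (1 + t) - y) := by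
    intro x y
    have h : ((x, y) : ℝ × ℝ) = x • ((1, 0) : ℝ × ℝ) + y • ((0, 1) : ℝ × ℝ) := by
      simp [Prod.ext_iff]
    rw [h, map_add, map_smul, map_smul, hB1, hB2]
    simp only [Prod.smul_def, Prod.mk_add_mk, Prod.ext_iff, smul_eq_mul]
    constructor <;> ring
  intro j
  induction j with
  | zero =>
    refine ⟨?_, ?_, ?_, ?_⟩
    · rw [pow_zero, Module.End.one_apply]
      simp only [Prod.smul_def, Prod.ext_iff, smul_eq_mul]
      constructor <;> field_simp <;> ring
    · rw [pow_zero, Module.End.mul_apply, Module.End.one_apply, hB' 1 0]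
      simp only [Prod.smul_def, Prod.ext_iff, smul_eq_mul]
      constructor <;> field_simp <;> ring
    · rw [pow_zero, Module.End.one_apply]
      simp only [Prod.smul_def, Prod.ext_iff, smul_eq_mul]
      constructor <;> field_simp <;> ring
    · rw [pow_zero, Module.End.mul_apply, Module.End.one_apply, hA' 0 1]
      simp only [Prod.smul_def, Prod.ext_iff, smul_eq_mul]
      constructor <;> field_simp <;> ring
  | succ j ih =>
    obtain ⟨ih1, ih2, ih3, ih4⟩ := ih
    have hpj : t ^ j ≠ 0 := pow_ne_zero _ ht0
    have h1 : ((A * B) ^ (j + 1)) (1, 0) =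
        (1 / (t ^ (j + 1) * (1 - t))) •
          ((1 - t ^ (2 * (j + 1) + 1), t * (1 - t ^ (2 * (j + 1)))) : ℝ × ℝ) := by
      rw [pow_succ', Module.End.mul_apply, Module.End.mul_apply, ih1,
        map_smul, hB', map_smul, hA']
      simp only [Prod.smul_def, Prod.ext_iff, smul_eq_mul]
      constructor <;> field_simp <;> ring
    have h3 : ((B * A) ^ (j + 1)) (0, 1) =
        (1 / (t ^ (j + 1) * (1 - t))) •
          ((1 - t ^ (2 * (j + 1)), 1 - t ^ (2 * (j + 1) + 1)) : ℝ × ℝ) := by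
      rw [pow_succ', Module.End.mul_apply, Module.End.mul_apply, ih3,
        map_smul, hA', map_smul, hB']
      simp only [Prod.smul_def, Prod.ext_iff, smul_eq_mul]
      constructor <;> field_simp <;> ring
    refine ⟨h1, ?_, h3, ?_⟩
    · rw [Module.End.mul_apply, h1, map_smul, hB']
      simp only [Prod.smul_def, Prod.ext_iff, smul_eq_mul]
      constructor
      · trivial
      · field_simp
        ring
    · rw [Module.End.mul_apply, h3, map_smul, hA']
      simp only [Prod.smul_def, Prod.ext_iff, smul_eq_mul]
      constructor <;> field_simp <;> ring
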